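/- Let T, ν, ε, v > 0, s ∈ ℝ, and let η₀ be the unique positive root of g(η) := ε²ν²η² + (ν²v − 4ε²T)η − 4(T+1)v. Then for every real ξ with 0 ≤ ξ² ≤ η₀, every complex root λ of the quadratic λ² − (2siξ − (ν/v)ξ²)λ − s²ξ² − (ν/v)siξ³ + ((T+1)/v²)ξ² − ε²ξ⁴/(ε²v²ξ² + v³) = 0 satisfies Re λ = −(ν/(2v))ξ². -/

import Mathlib

set_option maxHeartbeats 1000000
open Complex

/-- **Real part of dispersion roots in the inner frequency range.**
For `T, ν, ε, v > 0`, `s ∈ ℝ`, and `η₀` the unique positive root of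
`g(η) = ε²ν²η² + (ν²v - 4ε²T)η - 4(T+1)v`, every complex root `λ` of
`λ² - (2siξ - (ν/v)ξ²)λ - s²ξ² - (ν/v)siξ³ + ((T+1)/v²)ξ² - ε²ξ⁴/(ε²v²ξ² + v³) = 0`
with `0 ≤ ξ² ≤ η₀` satisfies `Re λ = -(ν/(2v))ξ²`. -/
theorem stmt5 (T ν ε v s : ℝ)
    (hT : 0 < T) (hν : 0 < ν) (hε : 0 < ε) (hv : 0 < v)
    (g : ℝ → ℝ)
    (hg : ∀ η : ℝ, g η = ε ^ 2 * ν ^ 2 * η ^ 2 + (ν ^ 2 * v - 4 * ε ^ 2 * T) * η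
      - 4 * (T + 1) * v)
    (η₀ : ℝ) (hη₀pos : 0 < η₀) (hη₀root : g η₀ = 0)
    (hη₀uniq : ∀ η : ℝ, 0 < η → g η = 0 → η = η₀) :
    ∀ (ξ : ℝ) (l : ℂ), ξ ^ 2 ≤ η₀ →
      l ^ 2 - (2 * (s : ℂ) * Complex.I * (ξ : ℂ) - ((ν : ℂ) / (v : ℂ)) * (ξ : ℂ) ^ 2) * l
          - (s : ℂ) ^ 2 * (ξ : ℂ) ^ 2 - ((ν : ℂ) / (v : ℂ)) * (s : ℂ) * Complex.I * (ξ : ℂ) ^ 3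
          + (((T : ℂ) + 1) / (v : ℂ) ^ 2) * (ξ : ℂ) ^ 2
          - (ε : ℂ) ^ 2 * (ξ : ℂ) ^ 4 / ((ε : ℂ) ^ 2 * (v : ℂ) ^ 2 * (ξ : ℂ) ^ 2 + (v : ℂ) ^ 3)
        = 0 →
      l.re = -(ν / (2 * v)) * ξ ^ 2 := by
  intro ξ l hξ2 heq
  have hξ0 : (0:ℝ) ≤ ξ ^ 2 := sq_nonneg ξ
  have hd : (0:ℝ) < ε ^ 2 * v ^ 2 * ξ ^ 2 + v ^ 3 := by positivity
  have h0 := hη₀root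
  rw [hg] at h0
  have hgle : ε ^ 2 * ν ^ 2 * (ξ ^ 2) ^ 2 + (ν ^ 2 * v - 4 * ε ^ 2 * T) * ξ ^ 2
      - 4 * (T + 1) * v ≤ 0 := by
    nlinarith [mul_nonneg (mul_nonneg (sub_nonneg.2 hξ2)
        (mul_nonneg (sq_nonneg ε) (sq_nonneg ν))) (mul_nonneg hη₀pos.le hξ0),
      mul_nonneg (sub_nonneg.2 hξ2) (by positivity : (0:ℝ) ≤ 4 * (T + 1) * v), hη₀pos]
  set q : ℝ := ε ^ 2 * ξ ^ 4 / (ε ^ 2 * v ^ 2 * ξ ^ 2 + v ^ 3) with hqdef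
  have hq : q * (ε ^ 2 * v ^ 2 * ξ ^ 2 + v ^ 3) = ε ^ 2 * ξ ^ 4 := by
    rw [hqdef, div_mul_cancel₀ _ hd.ne']
  have hcast : (ε : ℂ) ^ 2 * (ξ : ℂ) ^ 4 / ((ε : ℂ) ^ 2 * (v : ℂ) ^ 2 * (ξ : ℂ) ^ 2 + (v : ℂ) ^ 3)
      = (q : ℂ) := by rw [hqdef]; push_cast; ring
  rw [hcast] at heq
  clear_value q
  have hDs : ν ^ 2 * ξ ^ 4 - 4 * (T + 1) * ξ ^ 2 + 4 * v ^ 2 * q ≤ 0 := by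
    nlinarith [hq, hd, mul_nonneg (mul_nonneg hξ0 (sq_nonneg v)) (neg_nonneg.2 hgle)]
  obtain ⟨x, y⟩ := l
  rw [Complex.mk_eq_add_mul_I] at heq
  have h1 := congrArg Complex.re heq
  have h2 := congrArg Complex.im heq
  field_simp [hv.ne'] at h1 h2
  simp only [pow_succ, pow_zero, one_mul] at h1 h2
  simp [Complex.add_re, Complex.sub_re, Complex.mul_re, Complex.mul_im, Complex.add_im,
    Complex.sub_im, Complex.I_re, Complex.I_im, Complex.ofReal_re, Complex.ofReal_im,
    Complex.div_re, Complex.div_im, Complex.normSq] at h1 h2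
  ring_nf at h1 h2
  have h1' := h1.resolve_right hv.ne'
  have h2' := (h2.resolve_right hv.ne').resolve_left hv.ne'
  have hUW : (2 * v * x + ν * ξ ^ 2) * (y - s * ξ) = 0 := by linear_combination h2'
  have hkeyv : ((2 * v * x + ν * ξ ^ 2) ^ 2 - 4 * v ^ 2 * (y - s * ξ) ^ 2) * v
      = (ν ^ 2 * ξ ^ 4 - 4 * (T + 1) * ξ ^ 2 + 4 * v ^ 2 * q) * v := by
    linear_combination 4 * v * h1'
  have hkey := mul_right_cancel₀ hv.ne' hkeyv
  have hUle : (2 * v * x + ν * ξ ^ 2) ^ 2 ≤ 4 * v ^ 2 * (y - s * ξ) ^ 2 := by linarith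
  have hUW2 : ((2 * v * x + ν * ξ ^ 2) * (y - s * ξ)) ^ 2 = 0 := by rw [hUW]; ring
  have hU4 : (2 * v * x + ν * ξ ^ 2) ^ 4 ≤ 0 := by
    have e1 := mul_le_mul_of_nonneg_left hUle (sq_nonneg (2 * v * x + ν * ξ ^ 2))
    have e2 : (2 * v * x + ν * ξ ^ 2) ^ 2 * (4 * v ^ 2 * (y - s * ξ) ^ 2) = 0 := by
      linear_combination (4 * v ^ 2) * hUW2
    nlinarith [e1, e2]
  have hU : 2 * v * x + ν * ξ ^ 2 = 0 := by
    have h4 : (2 * v * x + ν * ξ ^ 2) ^ 4 = 0 := le_antisymm hU4 (by positivity)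
    exact pow_eq_zero_iff (by norm_num) |>.mp h4
  show x = -(ν / (2 * v)) * ξ ^ 2
  field_simp
  linarith
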